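/- Let γ > 0, let q be a probability density on ℝ^m, and let f(y|x) ≥ 0 and g(y|x) ≥ 0 be measurable with ⟨q g^{1+γ}⟩ ∈ (0,∞) and ⟨f q g^γ⟩ ∈ (0,∞), where ⟨h⟩ = ∬h(x,y)dx dy. Then for every c > 0, the conditional density-power score satisfies S_power(f, c·g; q) ≥ −⟨f q g^γ⟩^{1+γ}/⟨q g^{1+γ}⟩^γ = −(−S_sphere(f,g;q))^{1+γ}, and equality holds when c = ⟨f q g^γ⟩/⟨q g^{1+γ}⟩. -/

import Mathlib

open MeasureTheory

open Real in

lemma key_ineq {γ a b c : ℝ} (hγ : 0 < γ) (ha : 0 < a) (hb : 0 < b) (hc : 0 < c) :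
    -(a ^ (1+γ)) / b ^ γ ≤ γ * c ^ (1+γ) * b - (1+γ) * c ^ γ * a := by
  have h1γ : 0 < 1 + γ := by linarith
  have hpq : ((1+γ)/γ).HolderConjugate (1+γ) := by
    rw [Real.holderConjugate_iff]
    constructor
    · rw [lt_div_iff₀ hγ]; linarith
    · field_simp; ring
  have hx : 0 ≤ c ^ γ * b ^ (γ/(1+γ)) := by positivity
  have hy : 0 ≤ a * b ^ (-(γ/(1+γ))) := by positivity
  have this := Real.young_inequality_of_nonneg hx hy hpq
  have hxp : (c ^ γ * b ^ (γ/(1+γ))) ^ ((1+γ)/γ) = c ^ (1+γ) * b := by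
    rw [mul_rpow (rpow_nonneg hc.le _) (rpow_nonneg hb.le _),
      ← rpow_mul hc.le, ← rpow_mul hb.le,
      show γ * ((1+γ)/γ) = 1+γ by field_simp,
      show γ/(1+γ) * ((1+γ)/γ) = 1 by field_simp, rpow_one]
  have hyp : (a * b ^ (-(γ/(1+γ)))) ^ (1+γ) = a ^ (1+γ) / b ^ γ := by
    rw [mul_rpow ha.le (rpow_nonneg hb.le _), ← rpow_mul hb.le,
      show -(γ/(1+γ)) * (1+γ) = -γ by field_simp,
      rpow_neg hb.le, div_eq_mul_inv]
  have hxy : c ^ γ * b ^ (γ/(1+γ)) * (a * b ^ (-(γ/(1+γ)))) = c ^ γ * a := by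
    rw [mul_mul_mul_comm, ← rpow_add hb]
    simp
  rw [hxp, hyp, hxy] at this
  have h2 : (c ^ (1+γ) * b) / ((1+γ)/γ) = γ/(1+γ) * (c ^ (1+γ) * b) := by
    field_simp
  rw [h2] at this
  have h3 := mul_le_mul_of_nonneg_left this h1γ.le
  rw [mul_add, show (1+γ) * (γ/(1+γ) * (c ^ (1+γ) * b)) = γ * c ^ (1+γ) * b by
      field_simp, mul_div_cancel₀ _ (ne_of_gt h1γ)] at h3
  rw [neg_div]
  linarith


/-- For every `c > 0`, the conditional density-power score
`S_power(f, c·g; q) = γc^{1+γ}⟨q g^{1+γ}⟩ − (1+γ)c^γ⟨f q g^γ⟩` satisfies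
`S_power(f, c·g; q) ≥ −⟨f q g^γ⟩^{1+γ}/⟨q g^{1+γ}⟩^γ = −(−S_sphere(f,g;q))^{1+γ}`,
with equality when `c = ⟨f q g^γ⟩/⟨q g^{1+γ}⟩`. -/
theorem conditional_density_power_score_scaled_lower_bound
    {m : ℕ} (γ : ℝ) (hγ : 0 < γ)
    (q : (Fin m → ℝ) → ℝ)
    (hqm : Measurable q) (hq0 : ∀ x, 0 ≤ q x)
    (hqi : Integrable q) (hq1 : (∫ x, q x) = 1)
    (f g : ((Fin m → ℝ) × ℝ) → ℝ)
    (hfm : Measurable f) (hgm : Measurable g)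
    (hf0 : ∀ z, 0 ≤ f z) (hg0 : ∀ z, 0 ≤ g z)
    (hgint : Integrable (fun z => q z.1 * g z ^ (1 + γ)))
    (hgpos : 0 < ∫ z, q z.1 * g z ^ (1 + γ))
    (hfgint : Integrable (fun z => f z * q z.1 * g z ^ γ))
    (hfgpos : 0 < ∫ z, f z * q z.1 * g z ^ γ) :
    (∀ c : ℝ, 0 < c →
      -((∫ z, f z * q z.1 * g z ^ γ) ^ (1 + γ)) / (∫ z, q z.1 * g z ^ (1 + γ)) ^ γ ≤
        γ * c ^ (1 + γ) * (∫ z, q z.1 * g z ^ (1 + γ)) -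
          (1 + γ) * c ^ γ * (∫ z, f z * q z.1 * g z ^ γ)) ∧
    (-((∫ z, f z * q z.1 * g z ^ γ) ^ (1 + γ)) / (∫ z, q z.1 * g z ^ (1 + γ)) ^ γ =
      -((-(-(∫ z, f z * q z.1 * g z ^ γ) /
            (∫ z, q z.1 * g z ^ (1 + γ)) ^ (γ / (1 + γ)))) ^ (1 + γ))) ∧
    (γ * ((∫ z, f z * q z.1 * g z ^ γ) / (∫ z, q z.1 * g z ^ (1 + γ))) ^ (1 + γ) *
          (∫ z, q z.1 * g z ^ (1 + γ)) -
        (1 + γ) * ((∫ z, f z * q z.1 * g z ^ γ) / (∫ z, q z.1 * g z ^ (1 + γ))) ^ γ *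
          (∫ z, f z * q z.1 * g z ^ γ) =
      -((∫ z, f z * q z.1 * g z ^ γ) ^ (1 + γ)) /
        (∫ z, q z.1 * g z ^ (1 + γ)) ^ γ) := by
  set A := ∫ z, f z * q z.1 * g z ^ γ with hA
  set B := ∫ z, q z.1 * g z ^ (1 + γ) with hB
  have h1γ : 0 < 1 + γ := by linarith
  have h1γ' : (1 : ℝ) + γ ≠ 0 := ne_of_gt h1γ
  refine ⟨fun c hc => key_ineq hγ hfgpos hgpos hc, ?_, ?_⟩
  · rw [show -(-A / B ^ (γ/(1+γ))) = A / B ^ (γ/(1+γ)) by rw [neg_div, neg_neg],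
      Real.div_rpow hfgpos.le (Real.rpow_nonneg hgpos.le _),
      ← Real.rpow_mul hgpos.le, div_mul_cancel₀ _ h1γ', neg_div]
  · rw [Real.div_rpow hfgpos.le hgpos.le, Real.div_rpow hfgpos.le hgpos.le,
      show B ^ (1+γ) = B * B ^ γ by rw [Real.rpow_add hgpos, Real.rpow_one],
      show A ^ (1+γ) = A * A ^ γ by rw [Real.rpow_add hfgpos, Real.rpow_one]]
    have hBγ : (0:ℝ) < B ^ γ := Real.rpow_pos_of_pos hgpos γ
    have hAγ : (0:ℝ) < A ^ γ := Real.rpow_pos_of_pos hfgpos γ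
    field_simp
    ring
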